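/- arXiv:2604.15135 — 4 statements merged into one kernel-verified Lean document; each statement's English description precedes it below -/
import Mathlib

section
/- Let z_0,...,z_n be distinct points on the unit circle with Lagrange basis polynomials L_k. Then max_{0≤k≤n} (1/(2π)) ∫_0^{2π} |L_k(e^{iθ})|² dθ ≤ ‖V(z_0,...,z_n)^{-1}‖₂² ≤ Σ_{k=0}^n (1/(2π)) ∫_0^{2π} |L_k(e^{iθ})|² dθ. -/
set_option maxHeartbeats 1000000
set_option synthInstance.maxHeartbeats 400000

open Complex Matrix Real MeasureTheory Polynomial

lemma ortho (k : ℤ) : (∫ θ in (0:ℝ)..(2*π), Complex.exp (k * θ * Complex.I))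
    = if k = 0 then ((2*π : ℝ) : ℂ) else 0 := by
  split_ifs with h
  · simp [h]
  · have hc : (k : ℂ) * Complex.I ≠ 0 := by simp [Complex.I_ne_zero, h]
    have key := integral_exp_mul_complex (a := (0:ℝ)) (b := 2*π) hc
    have h1 : (fun θ : ℝ => Complex.exp ((k:ℂ) * θ * Complex.I))
        = fun θ : ℝ => Complex.exp ((k:ℂ) * Complex.I * θ) := by
      funext θ; ring_nf
    rw [h1, key]
    have h2 : (k : ℂ) * Complex.I * ((2:ℝ)*π : ℝ) = (k:ℂ) * (2 * π * Complex.I) := by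
      push_cast; ring
    rw [h2, Complex.exp_int_mul_two_pi_mul_I]
    simp

lemma interval_re (f : ℝ → ℂ) (a b : ℝ) (hf : IntervalIntegrable f volume a b) :
    (∫ θ in a..b, (f θ).re) = (∫ θ in a..b, f θ).re := by
  simp only [intervalIntegral, Complex.sub_re]
  have h1 := integral_re hf.1
  have h2 := integral_re hf.2
  simp only [RCLike.re_eq_complex_re] at h1 h2
  rw [← h1, ← h2]

/-- auxiliary kernel -/
noncomputable def pker {N : ℕ} (c : Fin N → ℂ) (j m : Fin N) (θ : ℝ) : ℂ :=
  (c j * (starRingEnd ℂ) (c m)) * Complex.exp (((((j:ℕ):ℤ) - ((m:ℕ):ℤ) : ℤ) : ℂ) * θ * Complex.I)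

lemma pker_cont {N : ℕ} (c : Fin N → ℂ) (j m : Fin N) : Continuous (pker c j m) := by
  unfold pker; fun_prop

lemma pker_int {N : ℕ} (c : Fin N → ℂ) (j m : Fin N) :
    (∫ θ in (0:ℝ)..(2*π), pker c j m θ)
      = if j = m then ((‖c j‖^2 * (2*π) : ℝ) : ℂ) else 0 := by
  unfold pker
  rw [intervalIntegral.integral_const_mul, ortho]
  split_ifs with h1 h2 h2
  · subst h2
    rw [Complex.mul_conj]
    push_cast
    rw [Complex.normSq_eq_norm_sq]
    norm_num
  · exact absurd (Fin.ext (by omega)) h2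
  · exact absurd (by simp [h2]) h1
  · exact mul_zero _

lemma parseval {N : ℕ} (c : Fin N → ℂ) :
    (∫ θ in (0:ℝ)..(2*π), ‖∑ j : Fin N, c j * Complex.exp (θ * Complex.I) ^ (j:ℕ)‖ ^ 2)
    = (2*π) * ∑ j : Fin N, ‖c j‖ ^ 2 := by
  have key : ∀ θ : ℝ, (‖∑ j : Fin N, c j * Complex.exp (θ * Complex.I) ^ (j:ℕ)‖ : ℝ) ^ 2
      = ((∑ j : Fin N, ∑ m : Fin N, pker c j m θ).re) := by
    intro θ
    set w : ℂ := ∑ j : Fin N, c j * Complex.exp (θ * Complex.I) ^ (j:ℕ) with hw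
    have h1 : w * (starRingEnd ℂ) w = ∑ j : Fin N, ∑ m : Fin N, pker c j m θ := by
      rw [hw, map_sum, Finset.sum_mul_sum]
      refine Finset.sum_congr rfl fun j _ => Finset.sum_congr rfl fun m _ => ?_
      unfold pker
      rw [_root_.map_mul, _root_.map_pow]
      have hcon : (starRingEnd ℂ) (Complex.exp (θ * Complex.I)) = Complex.exp (-(θ * Complex.I)) := by
        rw [← Complex.exp_conj]; congr 1
        simp [Complex.conj_I]
      rw [hcon, ← Complex.exp_nat_mul, ← Complex.exp_nat_mul, mul_mul_mul_comm,
        ← Complex.exp_add]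
      congr 2
      push_cast; ring
    have h2 : w * (starRingEnd ℂ) w = ((‖w‖ ^ 2 : ℝ) : ℂ) := by
      rw [Complex.mul_conj]
      norm_cast
      rw [Complex.normSq_eq_norm_sq]
    rw [← h1, h2, Complex.ofReal_re]
  calc (∫ θ in (0:ℝ)..(2*π), ‖∑ j : Fin N, c j * Complex.exp (θ * Complex.I) ^ (j:ℕ)‖ ^ 2)
      = ∫ θ in (0:ℝ)..(2*π), (∑ j : Fin N, ∑ m : Fin N, pker c j m θ).re :=
        intervalIntegral.integral_congr fun θ _ => key θ
    _ = (∫ θ in (0:ℝ)..(2*π), ∑ j : Fin N, ∑ m : Fin N, pker c j m θ).re :=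
        interval_re _ _ _ (Continuous.intervalIntegrable (by
          exact continuous_finset_sum _ fun j _ => continuous_finset_sum _ fun m _ => pker_cont c j m) _ _)
    _ = (∑ j : Fin N, ∑ m : Fin N, ∫ θ in (0:ℝ)..(2*π), pker c j m θ).re := by
        rw [intervalIntegral.integral_finset_sum (fun j _ => Continuous.intervalIntegrable
          (continuous_finset_sum _ fun m _ => pker_cont c j m) _ _)]
        congr 1
        exact Finset.sum_congr rfl fun j _ => intervalIntegral.integral_finset_sum
          (fun m _ => (pker_cont c j m).intervalIntegrable _ _)
    _ = (2*π) * ∑ j : Fin N, ‖c j‖ ^ 2 := by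
        have : ∀ j : Fin N, (∑ m : Fin N, ∫ θ in (0:ℝ)..(2*π), pker c j m θ)
            = ((‖c j‖^2 * (2*π) : ℝ) : ℂ) := by
          intro j
          rw [Finset.sum_congr rfl fun m _ => pker_int c j m]
          simp
        rw [Finset.sum_congr rfl fun j _ => this j, ← Complex.ofReal_sum, Complex.ofReal_re,
          Finset.mul_sum]
        exact Finset.sum_congr rfl fun j _ => by ring

lemma row_norm_le {N : ℕ} (A : Matrix (Fin N) (Fin N) ℂ) (k : Fin N) :
    ∑ j : Fin N, ‖A k j‖ ^ 2 ≤ ‖Matrix.toEuclideanCLM (𝕜 := ℂ) A‖ ^ 2 := by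
  have hstar : ‖Matrix.toEuclideanCLM (𝕜 := ℂ) Aᴴ‖ = ‖Matrix.toEuclideanCLM (𝕜 := ℂ) A‖ := by
    rw [← Matrix.star_eq_conjTranspose, map_star, ContinuousLinearMap.star_eq_adjoint]
    exact LinearIsometryEquiv.norm_map ContinuousLinearMap.adjoint _
  set v : EuclideanSpace ℂ (Fin N) :=
    Matrix.toEuclideanCLM (𝕜 := ℂ) Aᴴ ((WithLp.equiv 2 _).symm (Pi.single k 1)) with hv
  have hvle : ‖v‖ ≤ ‖Matrix.toEuclideanCLM (𝕜 := ℂ) A‖ := by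
    rw [hv, ← hstar]
    calc ‖Matrix.toEuclideanCLM (𝕜 := ℂ) Aᴴ ((WithLp.equiv 2 _).symm (Pi.single k 1))‖
        ≤ ‖Matrix.toEuclideanCLM (𝕜 := ℂ) Aᴴ‖ * ‖((WithLp.equiv 2 _).symm (Pi.single k 1) : EuclideanSpace ℂ (Fin N))‖ :=
          ContinuousLinearMap.le_opNorm _ _
      _ = ‖Matrix.toEuclideanCLM (𝕜 := ℂ) Aᴴ‖ := by
          rw [show ((WithLp.equiv 2 _).symm (Pi.single k 1) : EuclideanSpace ℂ (Fin N))
            = EuclideanSpace.single k (1:ℂ) from rfl, EuclideanSpace.norm_single]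
          simp
  have hvsq : ‖v‖ ^ 2 = ∑ j : Fin N, ‖A k j‖ ^ 2 := by
    have hvap : ∀ j : Fin N, v j = (starRingEnd ℂ) (A k j) := by
      intro j
      rw [hv, WithLp.equiv_symm_apply, Matrix.toEuclideanCLM_toLp]
      simp [Matrix.toLin'_apply, Matrix.mulVec_single, Matrix.conjTranspose_apply]
    rw [EuclideanSpace.norm_eq, Real.sq_sqrt (Finset.sum_nonneg fun j _ => sq_nonneg _)]
    exact Finset.sum_congr rfl fun j _ => by rw [hvap j]; simp
  calc ∑ j : Fin N, ‖A k j‖ ^ 2 = ‖v‖ ^ 2 := hvsq.symm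
    _ ≤ ‖Matrix.toEuclideanCLM (𝕜 := ℂ) A‖ ^ 2 :=
        pow_le_pow_left₀ (norm_nonneg _) hvle 2

lemma opnorm_sq_le_frob {N : ℕ} (A : Matrix (Fin N) (Fin N) ℂ) :
    ‖Matrix.toEuclideanCLM (𝕜 := ℂ) A‖ ^ 2 ≤ ∑ k : Fin N, ∑ j : Fin N, ‖A k j‖ ^ 2 := by
  set S : ℝ := ∑ k : Fin N, ∑ j : Fin N, ‖A k j‖ ^ 2 with hS
  have hS0 : 0 ≤ S := Finset.sum_nonneg fun k _ => Finset.sum_nonneg fun j _ => sq_nonneg _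
  have hbound : ‖Matrix.toEuclideanCLM (𝕜 := ℂ) A‖ ≤ Real.sqrt S := by
    refine ContinuousLinearMap.opNorm_le_bound _ (Real.sqrt_nonneg _) fun x => ?_
    have hrow : ∀ k : Fin N, ‖(Matrix.toEuclideanCLM (𝕜 := ℂ) A x) k‖ ^ 2
        ≤ (∑ j : Fin N, ‖A k j‖ ^ 2) * ‖x‖ ^ 2 := by
      intro k
      set a : EuclideanSpace ℂ (Fin N) :=
        (WithLp.equiv 2 _).symm (fun j => (starRingEnd ℂ) (A k j)) with ha
      have hip : (inner ℂ a x : ℂ) = (Matrix.toEuclideanCLM (𝕜 := ℂ) A x) k := by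
        rw [PiLp.inner_apply]
        have : (Matrix.toEuclideanCLM (𝕜 := ℂ) A x) k
            = A.mulVec (WithLp.equiv 2 _ x) k := rfl
        rw [this, Matrix.mulVec, dotProduct]
        refine Finset.sum_congr rfl fun j _ => ?_
        simp [ha, RCLike.inner_apply, mul_comm]
      have hna : ‖a‖ ^ 2 = ∑ j : Fin N, ‖A k j‖ ^ 2 := by
        rw [EuclideanSpace.norm_eq, Real.sq_sqrt (Finset.sum_nonneg fun j _ => sq_nonneg _)]
        exact Finset.sum_congr rfl fun j _ => by simp [ha]
      calc ‖(Matrix.toEuclideanCLM (𝕜 := ℂ) A x) k‖ ^ 2 = ‖(inner ℂ a x : ℂ)‖ ^ 2 := by rw [hip]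
        _ ≤ (‖a‖ * ‖x‖) ^ 2 := pow_le_pow_left₀ (norm_nonneg _) (norm_inner_le_norm a x) 2
        _ = (∑ j : Fin N, ‖A k j‖ ^ 2) * ‖x‖ ^ 2 := by rw [mul_pow, hna]
    have hTx : ‖Matrix.toEuclideanCLM (𝕜 := ℂ) A x‖ ^ 2 ≤ S * ‖x‖ ^ 2 := by
      rw [EuclideanSpace.norm_eq, Real.sq_sqrt (Finset.sum_nonneg fun j _ => sq_nonneg _), hS,
        Finset.sum_mul]
      exact Finset.sum_le_sum fun k _ => hrow k
    calc ‖Matrix.toEuclideanCLM (𝕜 := ℂ) A x‖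
        = Real.sqrt (‖Matrix.toEuclideanCLM (𝕜 := ℂ) A x‖ ^ 2) :=
          (Real.sqrt_sq (norm_nonneg _)).symm
      _ ≤ Real.sqrt (S * ‖x‖ ^ 2) := Real.sqrt_le_sqrt hTx
      _ = Real.sqrt S * ‖x‖ := by
          rw [Real.sqrt_mul hS0, Real.sqrt_sq (norm_nonneg _)]
  calc ‖Matrix.toEuclideanCLM (𝕜 := ℂ) A‖ ^ 2 ≤ (Real.sqrt S) ^ 2 :=
        pow_le_pow_left₀ (norm_nonneg _) hbound 2
    _ = S := Real.sq_sqrt hS0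

lemma lagrange_eq {n : ℕ} (z : Fin (n + 1) → ℂ) (hinj : Function.Injective z)
    (k : Fin (n + 1)) (w : ℂ) :
    (∏ j ∈ Finset.univ.erase k, ((w - z j) / (z k - z j)))
      = ∑ j : Fin (n + 1), ((Matrix.of fun j m : Fin (n + 1) => z m ^ (j : ℕ))⁻¹) k j * w ^ (j:ℕ) := by
  set V : Matrix (Fin (n+1)) (Fin (n+1)) ℂ := Matrix.of fun j m : Fin (n + 1) => z m ^ (j : ℕ) with hV
  have hdet : IsUnit V.det := by
    have : V = (Matrix.vandermonde z)ᵀ := by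
      ext j m; simp [hV, Matrix.vandermonde]
    rw [this, Matrix.det_transpose, Matrix.det_vandermonde]
    rw [isUnit_iff_ne_zero]
    refine Finset.prod_ne_zero_iff.2 fun i _ => Finset.prod_ne_zero_iff.2 fun j hj => ?_
    exact sub_ne_zero.2 fun h => (Finset.mem_Ioi.1 hj).ne' (hinj h)
  set A := V⁻¹ with hA
  have hAV : A * V = 1 := Matrix.nonsing_inv_mul V hdet
  -- the two polynomials
  set p : ℂ[X] := ∑ j : Fin (n+1), C (A k j) * X ^ (j:ℕ) with hp
  set q : ℂ[X] := ∏ j ∈ Finset.univ.erase k, (C (z k - z j)⁻¹ * (X - C (z j))) with hq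
  have hzkj : ∀ j : Fin (n+1), j ≠ k → z k - z j ≠ 0 := fun j hj =>
    sub_ne_zero.2 fun h => hj (hinj h.symm)
  have hevalp : ∀ m : Fin (n+1), p.eval (z m) = if k = m then 1 else 0 := by
    intro m
    have : (A * V) k m = if k = m then 1 else 0 := by rw [hAV, Matrix.one_apply]
    rw [← this, Matrix.mul_apply]
    simp [hp, eval_finset_sum, hV]
  have hevalq : ∀ m : Fin (n+1), q.eval (z m) = if k = m then 1 else 0 := by
    intro m
    rw [hq, eval_prod]
    by_cases hkm : k = m
    · subst hkm
      rw [if_pos rfl]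
      refine Finset.prod_eq_one fun j hj => ?_
      have hj' := Finset.ne_of_mem_erase hj
      simp only [eval_mul, eval_C, eval_sub, eval_X]
      exact inv_mul_cancel₀ (hzkj j hj')
    · rw [if_neg hkm]
      refine Finset.prod_eq_zero (Finset.mem_erase.2 ⟨fun h => hkm h.symm, Finset.mem_univ m⟩) ?_
      simp
  have hdegp : p.degree < (n + 1 : ℕ) := by
    rw [hp]
    refine lt_of_le_of_lt (Polynomial.degree_sum_le _ _) ?_
    rw [Finset.sup_lt_iff (by exact_mod_cast WithBot.bot_lt_coe _)]
    intro j _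
    refine lt_of_le_of_lt (Polynomial.degree_mul_le _ _) ?_
    refine lt_of_le_of_lt (add_le_add Polynomial.degree_C_le (le_of_eq (Polynomial.degree_X_pow _))) ?_
    rw [zero_add]
    exact_mod_cast Nat.cast_lt.2 j.isLt
  have hdegq : q.degree < (n + 1 : ℕ) := by
    rw [hq]
    have hfac : ∀ j ∈ Finset.univ.erase k,
        (C (z k - z j)⁻¹ * (X - C (z j))).degree ≤ (1 : WithBot ℕ) := by
      intro j _
      refine (Polynomial.degree_mul_le _ _).trans ?_
      refine (add_le_add Polynomial.degree_C_le (le_of_eq (Polynomial.degree_X_sub_C _))).trans ?_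
      simp
    refine lt_of_le_of_lt ((Polynomial.degree_prod_le _ _).trans (Finset.sum_le_sum hfac)) ?_
    rw [Finset.sum_const, Finset.card_erase_of_mem (Finset.mem_univ k), Finset.card_univ,
      Fintype.card_fin, Nat.add_sub_cancel, nsmul_eq_mul, mul_one]
    exact_mod_cast Nat.lt_succ_self n
  have hpq : p = q := by
    have hcard : ((Finset.univ : Finset (Fin (n+1))).card : ℕ) = n + 1 := by simp
    refine Polynomial.eq_of_degrees_lt_of_eval_index_eq (v := z) Finset.univ
      (Function.Injective.injOn hinj) ?_ ?_ ?_
    · rw [hcard]; exact_mod_cast hdegp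
    · rw [hcard]; exact_mod_cast hdegq
    · intro m _; rw [hevalp, hevalq]
  have := congrArg (Polynomial.eval w) hpq
  rw [hp, hq] at this
  rw [eval_finset_sum] at this
  rw [eval_prod] at this
  calc (∏ j ∈ Finset.univ.erase k, ((w - z j) / (z k - z j)))
      = ∏ j ∈ Finset.univ.erase k, Polynomial.eval w (C (z k - z j)⁻¹ * (X - C (z j))) := by
        refine Finset.prod_congr rfl fun j hj => ?_
        simp [div_eq_inv_mul, mul_comm]
    _ = ∑ j : Fin (n+1), A k j * w ^ (j:ℕ) := by
        rw [← this]
        exact Finset.sum_congr rfl fun j _ => by simp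

open Complex Matrix Real

/-- For distinct unit-circle nodes, with Lagrange basis polynomials `L k`,
`max_k (1/2π)∫|L k|² ≤ ‖V⁻¹‖₂² ≤ Σ_k (1/2π)∫|L k|²`. -/
theorem stmt3 (n : ℕ) (z : Fin (n + 1) → ℂ)
    (hz : ∀ j, ‖z j‖ = 1) (hinj : Function.Injective z) :
    (∀ k : Fin (n + 1),
      (1 / (2 * π)) * (∫ θ in (0:ℝ)..(2 * π),
          ‖∏ j ∈ Finset.univ.erase k,
            ((Complex.exp (θ * Complex.I) - z j) / (z k - z j))‖ ^ 2)
        ≤ ‖Matrix.toEuclideanCLM (𝕜 := ℂ)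
            ((Matrix.of fun j m : Fin (n + 1) => z m ^ (j : ℕ))⁻¹)‖ ^ 2) ∧
    ‖Matrix.toEuclideanCLM (𝕜 := ℂ)
        ((Matrix.of fun j m : Fin (n + 1) => z m ^ (j : ℕ))⁻¹)‖ ^ 2
      ≤ ∑ k : Fin (n + 1),
          (1 / (2 * π)) * (∫ θ in (0:ℝ)..(2 * π),
            ‖∏ j ∈ Finset.univ.erase k,
              ((Complex.exp (θ * Complex.I) - z j) / (z k - z j))‖ ^ 2) := by
  have key : ∀ k : Fin (n + 1),
      (1 / (2 * π)) * (∫ θ in (0:ℝ)..(2 * π),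
          ‖∏ j ∈ Finset.univ.erase k,
            ((Complex.exp (θ * Complex.I) - z j) / (z k - z j))‖ ^ 2)
      = ∑ j : Fin (n+1), ‖((Matrix.of fun j m : Fin (n + 1) => z m ^ (j : ℕ))⁻¹) k j‖ ^ 2 := by
    intro k
    have hcongr : (∫ θ in (0:ℝ)..(2 * π),
          ‖∏ j ∈ Finset.univ.erase k,
            ((Complex.exp (θ * Complex.I) - z j) / (z k - z j))‖ ^ 2)
        = ∫ θ in (0:ℝ)..(2 * π),
          ‖∑ j : Fin (n+1), ((Matrix.of fun j m : Fin (n + 1) => z m ^ (j : ℕ))⁻¹) k j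
            * Complex.exp (θ * Complex.I) ^ (j:ℕ)‖ ^ 2 := by
      refine intervalIntegral.integral_congr fun θ _ => ?_
      rw [lagrange_eq z hinj k (Complex.exp (θ * Complex.I))]
    rw [hcongr, parseval]
    have hπ : (2 * π) ≠ 0 := by positivity
    field_simp
  constructor
  · intro k
    rw [key k]
    exact row_norm_le _ k
  · rw [Finset.sum_congr rfl fun k _ => key k]
    exact opnorm_sq_le_frob _
end

section
/- Let z_0,...,z_n be points on the unit circle with pairwise arc-length distance at least ε, where (n+1)ε ≤ 2π. Then |det V(z_0,...,z_n)| ≥ |det V(1, e^{iε}, e^{2iε}, ..., e^{inε})|, i.e., equispaced nodes with gap exactly ε minimize the Vandermonde determinant modulus. -/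
open Complex Matrix Real

section Aux

/-- Factorization of a difference of unit complex exponentials. -/
lemma stmt8_expdiff (u v : ℝ) :
    Complex.exp ((u + v : ℝ) * Complex.I) - Complex.exp ((u - v : ℝ) * Complex.I)
      = Complex.exp ((u : ℝ) * Complex.I) * (2 * Real.sin v * Complex.I) := by
  have h1 : ((u + v : ℝ) : ℂ) * Complex.I = (u : ℝ) * Complex.I + (v : ℝ) * Complex.I := by
    push_cast; ring
  have h2 : ((u - v : ℝ) : ℂ) * Complex.I = (u : ℝ) * Complex.I + (-v : ℝ) * Complex.I := by
    push_cast; ring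
  rw [h1, h2, Complex.exp_add, Complex.exp_add, ← mul_sub]
  congr 1
  rw [Complex.exp_mul_I, Complex.exp_mul_I]
  push_cast
  rw [Complex.cos_neg, Complex.sin_neg, ← Complex.ofReal_sin]
  ring

lemma stmt8_normdiff (a b : ℝ) :
    ‖Complex.exp (a * Complex.I) - Complex.exp (b * Complex.I)‖
      = 2 * |Real.sin ((a - b) / 2)| := by
  have := stmt8_expdiff ((a + b) / 2) ((a - b) / 2)
  rw [show (a + b) / 2 + (a - b) / 2 = a by ring,
    show (a + b) / 2 - (a - b) / 2 = b by ring] at this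
  rw [this, norm_mul]
  have h1 : ‖Complex.exp (((a + b) / 2 : ℝ) * Complex.I)‖ = 1 := by
    exact Complex.norm_exp_ofReal_mul_I _
  rw [h1, one_mul, norm_mul, Complex.norm_I, mul_one]
  have : ((2 : ℂ) * Real.sin ((a - b) / 2)) = ((2 * Real.sin ((a - b) / 2) : ℝ) : ℂ) := by
    push_cast; ring
  rw [this, Complex.norm_real, Real.norm_eq_abs, abs_mul]
  norm_num

lemma stmt8_arg_exp_of_Ioc {d : ℝ} (h1 : -π < d) (h2 : d ≤ π) :
    Complex.arg (Complex.exp (d * Complex.I)) = d := by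
  rw [Complex.exp_mul_I]
  exact Complex.arg_cos_add_sin_mul_I ⟨h1, h2⟩

lemma stmt8_gap_extract {ε d : ℝ} (hεπ : ε ≤ π) (hd0 : 0 ≤ d) (hd2 : d < 2 * π)
    (h : ε ≤ |Complex.arg (Complex.exp (d * Complex.I))|) :
    ε ≤ d ∧ d ≤ 2 * π - ε := by
  by_cases hdp : d ≤ π
  · rw [stmt8_arg_exp_of_Ioc (by linarith [Real.pi_pos]) hdp, _root_.abs_of_nonneg hd0] at h
    exact ⟨h, by linarith⟩
  · push_neg at hdp
    have key : Complex.exp (d * Complex.I) = Complex.exp ((d - 2 * π : ℝ) * Complex.I) := by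
      rw [show ((d : ℂ)) * Complex.I = ((d - 2*π : ℝ) : ℂ) * Complex.I + 2 * π * Complex.I by
        push_cast; ring, Complex.exp_add, Complex.exp_two_pi_mul_I, mul_one]
    rw [key, stmt8_arg_exp_of_Ioc (by linarith) (by linarith)] at h
    rw [abs_of_nonpos (by linarith)] at h
    constructor <;> linarith

/-- Chord inequality: a product of sines with constrained sum is minimized
at the endpoints. -/
lemma stmt8_chord (N m : ℕ) (hmN : m ≤ N) (A B : ℝ) (h0 : 0 ≤ A) (hAB : A ≤ B) (hBpi : B ≤ π)
    (hsA : 0 < Real.sin A) (hsB : 0 < Real.sin B)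
    (x : ℕ → ℝ) (hx : ∀ i ∈ Finset.range N, A ≤ x i ∧ x i ≤ B)
    (hsum : ∑ i ∈ Finset.range N, x i = (N - m : ℕ) * A + m * B) :
    Real.sin A ^ (N - m) * Real.sin B ^ m ≤ ∏ i ∈ Finset.range N, Real.sin (x i) := by
  rcases eq_or_lt_of_le hAB with rfl | hlt
  · have hxi : ∀ i ∈ Finset.range N, x i = A := fun i hi => le_antisymm (hx i hi).2 (hx i hi).1
    rw [Finset.prod_congr rfl fun i hi => by rw [hxi i hi], Finset.prod_const, ← pow_add,
      Nat.sub_add_cancel hmN, Finset.card_range]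
  · set s : ℕ → ℝ := fun i => (x i - A) / (B - A) with hs
    have hBA : (0:ℝ) < B - A := by linarith
    have hs0 : ∀ i ∈ Finset.range N, 0 ≤ s i := fun i hi =>
      div_nonneg (by linarith [(hx i hi).1]) hBA.le
    have hs1 : ∀ i ∈ Finset.range N, s i ≤ 1 := fun i hi => by
      rw [div_le_one hBA]; linarith [(hx i hi).2]
    have hxs : ∀ i ∈ Finset.range N, x i = (1 - s i) * A + s i * B := fun i hi => by
      have h' : s i * (B - A) = x i - A := div_mul_cancel₀ _ hBA.ne'
      linear_combination -h'
    have hssum : ∑ i ∈ Finset.range N, s i = m := by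
      have h1 : ∑ i ∈ Finset.range N, (x i - A) = m * (B - A) := by
        rw [Finset.sum_sub_distrib, hsum, Finset.sum_const, Finset.card_range]
        have : ((N - m : ℕ) : ℝ) = (N : ℝ) - m := by
          push_cast [Nat.cast_sub hmN]; ring
        rw [this]; ring
      rw [hs]
      rw [← Finset.sum_div, h1, mul_div_assoc, div_self hBA.ne', mul_one]
    have pointwise : ∀ i ∈ Finset.range N,
        Real.sin A ^ (1 - s i) * Real.sin B ^ (s i) ≤ Real.sin (x i) := by
      intro i hi
      have step1 : Real.sin A ^ (1 - s i) * Real.sin B ^ (s i)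
          ≤ (1 - s i) * Real.sin A + s i * Real.sin B :=
        Real.geom_mean_le_arith_mean2_weighted
          (by linarith [hs1 i hi]) (hs0 i hi) hsA.le hsB.le (by ring)
      have step2 : (1 - s i) * Real.sin A + s i * Real.sin B
          ≤ Real.sin ((1 - s i) * A + s i * B) := by
        have conc : (1 - s i) • Real.sin A + (s i) • Real.sin B
            ≤ Real.sin ((1 - s i) • A + (s i) • B) :=
          strictConcaveOn_sin_Icc.concaveOn.2
            (Set.mem_Icc.2 ⟨h0, by linarith⟩) (Set.mem_Icc.2 ⟨by linarith, hBpi⟩)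
            (by linarith [hs1 i hi]) (hs0 i hi) (by ring)
        simpa [smul_eq_mul] using conc
      rw [hxs i hi]
      exact step1.trans step2
    calc Real.sin A ^ (N - m) * Real.sin B ^ m
        = ∏ i ∈ Finset.range N, Real.sin A ^ (1 - s i) * Real.sin B ^ (s i) := by
          rw [Finset.prod_mul_distrib]
          rw [← Real.rpow_natCast (Real.sin A), ← Real.rpow_natCast (Real.sin B)]
          have e1 : ∀ (a : ℝ), 0 < a → ∀ (f : ℕ → ℝ),
              ∏ i ∈ Finset.range N, a ^ (f i) = a ^ (∑ i ∈ Finset.range N, f i) := by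
            intro a ha f
            simp_rw [Real.rpow_def_of_pos ha, ← Real.exp_sum, ← Finset.mul_sum]
          rw [e1 _ hsA, e1 _ hsB, hssum]
          congr 2
          · rw [Finset.sum_sub_distrib, hssum, Finset.sum_const, Finset.card_range]
            push_cast [Nat.cast_sub hmN]; ring
      _ ≤ ∏ i ∈ Finset.range N, Real.sin (x i) := by
          apply Finset.prod_le_prod _ pointwise
          intro i hi
          positivity

/-- Regrouping a product over pairs `i < j` by the difference `m = j - i`. -/
lemma stmt8_regroup (n : ℕ) (G : ℕ → ℕ → ℝ) :
    ∏ i : Fin (n+1), ∏ j ∈ Finset.Ioi i, G i j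
      = ∏ m ∈ Finset.Icc 1 n, ∏ i ∈ Finset.range (n+1-m), G i (i+m) := by
  have e1 : ∏ p ∈ (Finset.univ : Finset (Fin (n+1))).sigma (fun i => Finset.Ioi i),
      G p.1.1 p.2.1 = ∏ i : Fin (n+1), ∏ j ∈ Finset.Ioi i, G i j :=
    Finset.prod_sigma _ _ _
  have e2 : ∏ q ∈ (Finset.Icc 1 n).sigma (fun m => Finset.range (n+1-m)),
      G q.2 (q.2 + q.1) = ∏ m ∈ Finset.Icc 1 n, ∏ i ∈ Finset.range (n+1-m), G i (i+m) :=
    Finset.prod_sigma _ _ _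
  rw [← e1, ← e2]
  apply Finset.prod_nbij' (i := fun p => (⟨p.2.1 - p.1.1, p.1.1⟩ : (_ : ℕ) × ℕ))
    (j := fun q => (⟨⟨q.2 % (n+1), Nat.mod_lt _ n.succ_pos⟩,
      ⟨(q.2 + q.1) % (n+1), Nat.mod_lt _ n.succ_pos⟩⟩ : (_ : Fin (n+1)) × Fin (n+1)))
  · rintro ⟨a, b⟩ hp
    simp only [Finset.mem_sigma, Finset.mem_univ, Finset.mem_Ioi, Fin.lt_def] at hp
    simp only [Finset.mem_sigma, Finset.mem_Icc, Finset.mem_range]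
    omega
  · rintro ⟨m, i⟩ hq
    simp only [Finset.mem_sigma, Finset.mem_Icc, Finset.mem_range] at hq
    simp only [Finset.mem_sigma, Finset.mem_univ, Finset.mem_Ioi, Fin.lt_def, true_and]
    simp only [Nat.mod_eq_of_lt (by omega : i < n+1), Nat.mod_eq_of_lt (by omega : i + m < n+1)]
    omega
  · rintro ⟨a, b⟩ hp
    simp only [Finset.mem_sigma, Finset.mem_univ, Finset.mem_Ioi, Fin.lt_def] at hp
    have h1 : a.1 < n+1 := a.2
    have h2 : b.1 < n+1 := b.2
    have hb : a.1 + (b.1 - a.1) = b.1 := by omega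
    simp only [hb, Sigma.mk.inj_iff, Fin.ext_iff, heq_eq_eq,
      Nat.mod_eq_of_lt h1, Nat.mod_eq_of_lt h2]
  · rintro ⟨m, i⟩ hq
    simp only [Finset.mem_sigma, Finset.mem_Icc, Finset.mem_range] at hq
    simp only [Sigma.mk.inj_iff, heq_eq_eq]
    simp only [Nat.mod_eq_of_lt (by omega : i < n+1), Nat.mod_eq_of_lt (by omega : i + m < n+1)]
    exact ⟨by omega, trivial⟩
  · rintro ⟨a, b⟩ hp
    simp only [Finset.mem_sigma, Finset.mem_univ, Finset.mem_Ioi, Fin.lt_def] at hp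
    dsimp only
    congr 1
    omega

/-- Reflection reindexing on `Icc 1 n`. -/
lemma stmt8_reflect (n : ℕ) (f : ℕ → ℝ) :
    ∏ m ∈ Finset.Icc 1 n, f (n+1-m) = ∏ m ∈ Finset.Icc 1 n, f m := by
  apply Finset.prod_nbij' (i := fun m => n+1-m) (j := fun m => n+1-m)
  · intro a ha; simp only [Finset.mem_Icc] at *; omega
  · intro a ha; simp only [Finset.mem_Icc] at *; omega
  · intro a ha; simp only [Finset.mem_Icc] at ha; omega
  · intro a ha; simp only [Finset.mem_Icc] at ha; omega
  · intro a ha; rfl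

lemma stmt8_det_norm_eq {N : ℕ} (v : Fin N → ℂ) :
    ‖(Matrix.of fun j k : Fin N => v k ^ (j : ℕ)).det‖
      = ∏ i : Fin N, ∏ j ∈ Finset.Ioi i, ‖v j - v i‖ := by
  have h : (Matrix.of fun j k : Fin N => v k ^ (j : ℕ)) = (Matrix.vandermonde v)ᵀ := rfl
  rw [h, Matrix.det_transpose, Matrix.det_vandermonde, norm_prod]
  exact Finset.prod_congr rfl fun i _ => norm_prod _ _

lemma stmt8_det_norm_perm {N : ℕ} (v : Fin N → ℂ) (σ : Equiv.Perm (Fin N)) :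
    ‖(Matrix.of fun j k : Fin N => v (σ k) ^ (j : ℕ)).det‖
      = ‖(Matrix.of fun j k : Fin N => v k ^ (j : ℕ)).det‖ := by
  have h : (Matrix.of fun j k : Fin N => v (σ k) ^ (j : ℕ))
      = (Matrix.of fun j k : Fin N => v k ^ (j : ℕ)).submatrix id σ := rfl
  rw [h, Matrix.det_permute']
  rcases Int.units_eq_one_or (Equiv.Perm.sign σ) with hs | hs <;> simp [hs]

/-- Splitting a telescoping-type sum. -/
lemma stmt8_Ssplit (n : ℕ) (φ : ℕ → ℝ) (d : ℕ) (hd : d ≤ n+1) :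
    ∑ i ∈ Finset.range (n+1-d), (φ (i+d) - φ i)
      = ∑ k ∈ Finset.range (n+1), φ k - ∑ k ∈ Finset.range d, φ k
        - ∑ k ∈ Finset.range (n+1-d), φ k := by
  rw [Finset.sum_sub_distrib]
  have h1 : ∑ k ∈ Finset.range (n+1), φ k
      = ∑ k ∈ Finset.range d, φ k + ∑ i ∈ Finset.range (n+1-d), φ (d+i) := by
    rw [← Finset.sum_range_add φ d (n+1-d), show d + (n+1-d) = n+1 by omega]
  have h2 : ∑ i ∈ Finset.range (n+1-d), φ (i+d)
      = ∑ i ∈ Finset.range (n+1-d), φ (d+i) :=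
    Finset.sum_congr rfl fun i _ => by rw [Nat.add_comm]
  rw [h2]
  linarith [h1]

/-- The per-`m` core inequality. -/
lemma stmt8_core (n : ℕ) (ε : ℝ) (hε : 0 < ε) (hNε : ((n:ℝ) + 1) * ε ≤ 2 * π)
    (φ : ℕ → ℝ)
    (pairb : ∀ a m : ℕ, 1 ≤ m → a + m ≤ n →
      (m:ℝ)*ε ≤ φ (a+m) - φ a ∧ φ (a+m) - φ a ≤ 2*π - ((n:ℝ)+1-m)*ε)
    (m : ℕ) (hm1 : 1 ≤ m) (hmn : m ≤ n) :
    (2 * Real.sin ((m:ℝ)*ε/2))^(n+1-m) * (2 * Real.sin (((n:ℝ)+1-m)*ε/2))^m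
      ≤ (∏ i ∈ Finset.range (n+1-m), 2 * Real.sin ((φ (i+m) - φ i)/2)) *
        (∏ i ∈ Finset.range m, 2 * Real.sin ((φ (i+(n+1-m)) - φ i)/2)) := by
  have hπ := Real.pi_pos
  have hn1 : (1:ℝ) ≤ (n:ℝ) := by exact_mod_cast Nat.one_le_cast.2 (le_trans hm1 hmn)
  have hm1' : (1:ℝ) ≤ (m:ℝ) := by exact_mod_cast hm1
  have hmn' : (m:ℝ) ≤ (n:ℝ) := by exact_mod_cast hmn
  set A : ℝ := (m:ℝ)*ε/2 with hA
  set B : ℝ := π - ((n:ℝ)+1-m)*ε/2 with hB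
  have hc : ((n+1-m : ℕ) : ℝ) = (n:ℝ)+1-m := by
    push_cast [Nat.cast_sub (by omega : m ≤ n+1)]; ring
  have hA0 : 0 < A := by rw [hA]; nlinarith
  have hAB : A ≤ B := by rw [hA, hB]; nlinarith
  have hBπ : B < π := by rw [hB]; nlinarith
  have hsA : 0 < Real.sin A := Real.sin_pos_of_pos_of_lt_pi hA0 (lt_of_le_of_lt hAB hBπ)
  have hsB : 0 < Real.sin B := Real.sin_pos_of_pos_of_lt_pi (lt_of_lt_of_le hA0 hAB) hBπ
  set x : ℕ → ℝ := fun i =>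
    if i < n+1-m then (φ (i+m) - φ i)/2 else π - (φ i - φ (i - (n+1-m)))/2 with hxdef
  have hpt : ∀ t, t < m → x ((n+1-m)+t) = π - (φ (t+(n+1-m)) - φ t)/2 := by
    intro t ht
    rw [hxdef]
    simp only [if_neg (by omega : ¬ (n+1-m)+t < n+1-m)]
    rw [show (n+1-m)+t - (n+1-m) = t by omega, show (n+1-m)+t = t+(n+1-m) by omega]
  have hx : ∀ i ∈ Finset.range (n+1), A ≤ x i ∧ x i ≤ B := by
    intro i hi
    rw [Finset.mem_range] at hi
    by_cases hcase : i < n+1-m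
    · have hb := pairb i m hm1 (by omega)
      rw [hxdef]; simp only [if_pos hcase]
      constructor
      · rw [hA]; linarith [hb.1]
      · rw [hB]; linarith [hb.2]
    · push_neg at hcase
      have hb := pairb (i - (n+1-m)) (n+1-m) (by omega) (by omega)
      rw [show i - (n+1-m) + (n+1-m) = i by omega] at hb
      rw [hc] at hb
      rw [show (n:ℝ) + 1 - ((n:ℝ)+1-(m:ℝ)) = (m:ℝ) by ring] at hb
      rw [hxdef]; simp only [if_neg (by omega : ¬ i < n+1-m)]
      constructor
      · rw [hA]; linarith [hb.2]
      · rw [hB]; linarith [hb.1]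
  have hsum : ∑ i ∈ Finset.range (n+1), x i = ((n+1) - m : ℕ) * A + m * B := by
    have hsplit := Finset.sum_range_add x (n+1-m) m
    rw [show (n+1-m) + m = n+1 by omega] at hsplit
    have hfirst : ∑ i ∈ Finset.range (n+1-m), x i
        = (∑ i ∈ Finset.range (n+1-m), (φ (i+m) - φ i)) / 2 := by
      rw [Finset.sum_div]
      exact Finset.sum_congr rfl fun i hi => by
        rw [Finset.mem_range] at hi
        rw [hxdef]; simp only [if_pos hi]
    have hsecond : ∑ t ∈ Finset.range m, x ((n+1-m) + t)
        = m * π - (∑ t ∈ Finset.range m, (φ (t+(n+1-m)) - φ t)) / 2 := by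
      rw [Finset.sum_congr rfl fun t ht => hpt t (Finset.mem_range.1 ht),
        Finset.sum_sub_distrib, Finset.sum_const, Finset.card_range, nsmul_eq_mul,
        ← Finset.sum_div]
    have hS1 := stmt8_Ssplit n φ m (by omega)
    have hS2 := stmt8_Ssplit n φ (n+1-m) (by omega)
    rw [show n+1-(n+1-m) = m by omega] at hS2
    rw [hsplit, hfirst, hsecond, hS1, hS2, hc, hA, hB]
    ring
  have hchord := stmt8_chord (n+1) m (by omega) A B hA0.le hAB hBπ.le hsA hsB x hx hsum
  have hsBc : Real.sin (((n:ℝ)+1-m)*ε/2) = Real.sin B := by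
    rw [hB, Real.sin_pi_sub]
  have h2pow : (2:ℝ)^(n+1-m) * (2:ℝ)^m = 2^(n+1) := by
    rw [← pow_add]; congr 1; omega
  have hP : ∏ i ∈ Finset.range (n+1), (2 * Real.sin (x i))
      = (∏ i ∈ Finset.range (n+1-m), 2 * Real.sin ((φ (i+m) - φ i)/2)) *
        (∏ i ∈ Finset.range m, 2 * Real.sin ((φ (i+(n+1-m)) - φ i)/2)) := by
    have hsplit := Finset.prod_range_add (fun i => 2 * Real.sin (x i)) (n+1-m) m
    rw [show (n+1-m) + m = n+1 by omega] at hsplit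
    rw [hsplit]
    congr 1
    · exact Finset.prod_congr rfl fun i hi => by
        rw [Finset.mem_range] at hi
        rw [hxdef]; simp only [if_pos hi]
    · exact Finset.prod_congr rfl fun t ht => by
        rw [hpt t (Finset.mem_range.1 ht), Real.sin_pi_sub]
  calc (2 * Real.sin ((m:ℝ)*ε/2))^(n+1-m) * (2 * Real.sin (((n:ℝ)+1-m)*ε/2))^m
      = ((2:ℝ)^(n+1-m) * 2^m) * (Real.sin A ^ (n+1-m) * Real.sin B ^ m) := by
        rw [hsBc, mul_pow, mul_pow, hA]; ring
    _ = 2^(n+1) * (Real.sin A ^ ((n+1)-m) * Real.sin B ^ m) := by rw [h2pow]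
    _ ≤ 2^(n+1) * ∏ i ∈ Finset.range (n+1), Real.sin (x i) :=
        mul_le_mul_of_nonneg_left hchord (by positivity)
    _ = ∏ i ∈ Finset.range (n+1), (2 * Real.sin (x i)) := by
        rw [Finset.prod_mul_distrib, Finset.prod_const, Finset.card_range]
    _ = _ := hP

end Aux

/-- If `z 0, ..., z n` are points on the unit circle with pairwise
arc-length distance at least `ε` and `(n+1)ε ≤ 2π`, then the modulus of the
Vandermonde determinant is at least that of the equispaced nodes `e^{ijε}`. -/
theorem stmt8 (n : ℕ) (ε : ℝ) (hε : 0 < ε) (hNε : (n + 1 : ℝ) * ε ≤ 2 * π)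
    (z : Fin (n + 1) → ℂ) (hz : ∀ j, ‖z j‖ = 1)
    (hgap : ∀ j k, j ≠ k → ε ≤ |Complex.arg (z j / z k)|) :
    ‖(Matrix.of fun j k : Fin (n + 1) =>
        Complex.exp ((k : ℕ) * ε * Complex.I) ^ (j : ℕ)).det‖
      ≤ ‖(Matrix.of fun j k : Fin (n + 1) => z k ^ (j : ℕ)).det‖ := by
  rcases Nat.eq_zero_or_pos n with rfl | hn
  · simp [Matrix.det_fin_one]
  have hπ := Real.pi_pos
  have hn1 : (1:ℝ) ≤ (n:ℝ) := by exact_mod_cast Nat.one_le_cast.2 hn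
  have hεπ : ε ≤ π := by nlinarith
  set θ : Fin (n+1) → ℝ := fun j => Complex.arg (z j) with hθ
  set σ := Tuple.sort θ with hσ
  set w : Fin (n+1) → ℂ := fun j => z (σ j) with hwdef
  have hwn : ∀ j, ‖w j‖ = 1 := fun j => hz _
  have hmono : Monotone fun j => Complex.arg (w j) := Tuple.monotone_sort θ
  have hwgap : ∀ j k, j ≠ k → ε ≤ |Complex.arg (w j / w k)| :=
    fun j k hjk => hgap _ _ (fun h => hjk (σ.injective h))
  have hdetz : ‖(Matrix.of fun j k : Fin (n+1) => z k ^ (j:ℕ)).det‖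
      = ∏ i : Fin (n+1), ∏ j ∈ Finset.Ioi i, ‖w j - w i‖ := by
    rw [← stmt8_det_norm_perm z σ]
    exact stmt8_det_norm_eq w
  set φ : ℕ → ℝ := fun a => Complex.arg (w ⟨min a n, by omega⟩) with hφdef
  have hφfin : ∀ j : Fin (n+1), Complex.arg (w j) = φ j.1 := by
    intro j
    have hj : (⟨min j.1 n, by omega⟩ : Fin (n+1)) = j := by
      apply Fin.ext; simp only []; omega
    simp only [hφdef]
    rw [hj]
  have hφmono : ∀ a b : ℕ, a ≤ b → φ a ≤ φ b := by
    intro a b hab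
    exact hmono (by simp only [Fin.mk_le_mk]; omega)
  have hφlo : ∀ a, -π < φ a := fun a => Complex.neg_pi_lt_arg _
  have hφhi : ∀ a, φ a ≤ π := fun a => Complex.arg_le_pi _
  have hwexp : ∀ j : Fin (n+1), w j = Complex.exp ((φ j.1 : ℝ) * Complex.I) := by
    intro j
    have h1 := Complex.norm_mul_exp_arg_mul_I (w j)
    have h2 : ‖w j‖ = 1 := hwn _
    rw [h2, Complex.ofReal_one, one_mul] at h1
    rw [← h1, hφfin j]
  have key_gap : ∀ a b : ℕ, a < b → b ≤ n → ε ≤ φ b - φ a ∧ φ b - φ a ≤ 2*π - ε := by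
    intro a b hab hbn
    have hdiv : w ⟨b, by omega⟩ / w ⟨a, by omega⟩
        = Complex.exp (((φ b - φ a : ℝ)) * Complex.I) := by
      rw [hwexp ⟨b, by omega⟩, hwexp ⟨a, by omega⟩, ← Complex.exp_sub]
      congr 1; push_cast; ring
    have hg := hwgap ⟨b, by omega⟩ ⟨a, by omega⟩ (by simp only [ne_eq, Fin.mk.injEq]; omega)
    rw [hdiv] at hg
    exact stmt8_gap_extract hεπ (sub_nonneg.2 (hφmono a b hab.le))
      (by linarith [hφlo a, hφhi b]) hg
  have tel : ∀ a d : ℕ, a + d ≤ n → (d : ℝ) * ε ≤ φ (a+d) - φ a := by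
    intro a d
    induction d with
    | zero => intro _; simp
    | succ d ih =>
      intro h
      have h1 := ih (by omega)
      have h2 := (key_gap (a+d) (a+d+1) (by omega) (by omega)).1
      rw [show a + (d+1) = (a+d)+1 by omega]
      push_cast
      linarith
  have pairb : ∀ a m : ℕ, 1 ≤ m → a + m ≤ n →
      (m:ℝ)*ε ≤ φ (a+m) - φ a ∧ φ (a+m) - φ a ≤ 2*π - ((n:ℝ)+1-m)*ε := by
    intro a m hm ham
    refine ⟨tel a m ham, ?_⟩
    have hwrap := (key_gap 0 n (by omega) le_rfl).2
    have t1 := tel 0 a (by omega)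
    rw [Nat.zero_add] at t1
    have t2 := tel (a+m) (n-(a+m)) (by omega)
    rw [show (a+m) + (n-(a+m)) = n by omega] at t2
    have hc2 : ((n-(a+m) : ℕ):ℝ) = (n:ℝ) - a - m := by
      push_cast [Nat.cast_sub (by omega : a+m ≤ n)]; ring
    rw [hc2] at t2
    linarith
  -- the `z` side as a grouped product
  have hsin_nonneg : ∀ a b : ℕ, a ≤ b → 0 ≤ Real.sin ((φ b - φ a)/2) := by
    intro a b hab
    apply Real.sin_nonneg_of_nonneg_of_le_pi
    · linarith [hφmono a b hab]
    · linarith [hφlo a, hφhi b]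
  have hPeq : ∏ i : Fin (n+1), ∏ j ∈ Finset.Ioi i, ‖w j - w i‖
      = ∏ m ∈ Finset.Icc 1 n, ∏ i ∈ Finset.range (n+1-m),
          2 * Real.sin ((φ (i+m) - φ i)/2) := by
    rw [← stmt8_regroup n (fun a b => 2 * Real.sin ((φ b - φ a)/2))]
    refine Finset.prod_congr rfl fun i _ => Finset.prod_congr rfl fun j hj => ?_
    rw [Finset.mem_Ioi] at hj
    have hij : i.1 ≤ j.1 := le_of_lt hj
    rw [hwexp j, hwexp i, stmt8_normdiff, _root_.abs_of_nonneg (hsin_nonneg _ _ hij)]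
  -- the equispaced side as a grouped product
  have hdetu : ‖(Matrix.of fun j k : Fin (n + 1) =>
        Complex.exp ((k : ℕ) * ε * Complex.I) ^ (j : ℕ)).det‖
      = ∏ i : Fin (n+1), ∏ j ∈ Finset.Ioi i,
          ‖Complex.exp (((j:ℕ) * ε : ℝ) * Complex.I)
            - Complex.exp (((i:ℕ) * ε : ℝ) * Complex.I)‖ := by
    have he : ∀ k : Fin (n+1), Complex.exp ((k : ℕ) * ε * Complex.I)
        = Complex.exp (((k:ℕ) * ε : ℝ) * Complex.I) := by
      intro k; congr 1; push_cast; ring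
    rw [show (Matrix.of fun j k : Fin (n + 1) =>
        Complex.exp ((k : ℕ) * ε * Complex.I) ^ (j : ℕ))
      = (Matrix.of fun j k : Fin (n + 1) =>
        Complex.exp (((k:ℕ) * ε : ℝ) * Complex.I) ^ (j : ℕ)) by
        ext j k; simp only [Matrix.of_apply]; rw [he k]]
    exact stmt8_det_norm_eq _
  have hQeq : (∏ i : Fin (n+1), ∏ j ∈ Finset.Ioi i,
        ‖Complex.exp (((j:ℕ) * ε : ℝ) * Complex.I)
          - Complex.exp (((i:ℕ) * ε : ℝ) * Complex.I)‖)
      = ∏ m ∈ Finset.Icc 1 n, ∏ i ∈ Finset.range (n+1-m),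
          2 * Real.sin ((((i+m : ℕ):ℝ) - (i:ℝ)) * ε / 2) := by
    rw [← stmt8_regroup n (fun a b => 2 * Real.sin ((((b:ℕ):ℝ) - ((a:ℕ):ℝ)) * ε / 2))]
    refine Finset.prod_congr rfl fun i _ => Finset.prod_congr rfl fun j hj => ?_
    rw [Finset.mem_Ioi] at hj
    have hij : (i.1 : ℝ) ≤ (j.1 : ℝ) := by exact_mod_cast le_of_lt hj
    have hjn : (j.1 : ℝ) ≤ (n : ℝ) := by exact_mod_cast Nat.lt_succ_iff.mp j.2
    have hin : (0 : ℝ) ≤ (i.1 : ℝ) := by positivity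
    rw [stmt8_normdiff, show ((j.1:ℕ):ℝ) * ε - ((i.1:ℕ):ℝ) * ε = (((j.1:ℕ):ℝ) - ((i.1:ℕ):ℝ)) * ε
      by ring, _root_.abs_of_nonneg]
    apply Real.sin_nonneg_of_nonneg_of_le_pi
    · have : (0:ℝ) ≤ ((j.1:ℕ):ℝ) - ((i.1:ℕ):ℝ) := by linarith
      positivity
    · nlinarith
  rw [hdetu, hQeq, hdetz, hPeq]
  -- now compare the two grouped products
  set C : ℕ → ℝ := fun m => ∏ i ∈ Finset.range (n+1-m),
    2 * Real.sin ((φ (i+m) - φ i)/2) with hC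
  set Qc : ℕ → ℝ := fun m => ∏ i ∈ Finset.range (n+1-m),
    2 * Real.sin ((((i+m : ℕ):ℝ) - (i:ℝ)) * ε / 2) with hQc
  have hQcpow : ∀ m, 1 ≤ m → m ≤ n → Qc m = (2 * Real.sin ((m:ℝ)*ε/2))^(n+1-m) := by
    intro m hm1 hmn
    rw [hQc]
    simp only []
    rw [Finset.prod_congr rfl (fun i _ => by
      rw [show (((i+m : ℕ):ℝ) - (i:ℝ)) * ε / 2 = (m:ℝ)*ε/2 by push_cast; ring]),
      Finset.prod_const, Finset.card_range]
  have hsinm_nonneg : ∀ m : ℕ, m ≤ n+1 → 0 ≤ Real.sin ((m:ℝ)*ε/2) := by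
    intro m hm
    apply Real.sin_nonneg_of_nonneg_of_le_pi
    · positivity
    · have : (m:ℝ) ≤ (n:ℝ)+1 := by exact_mod_cast hm
      nlinarith
  have hcast : ∀ m : ℕ, m ≤ n → ((n+1-m : ℕ) : ℝ) = (n:ℝ)+1-m := by
    intro m hm
    push_cast [Nat.cast_sub (by omega : m ≤ n+1)]; ring
  have hkey : ∀ m ∈ Finset.Icc 1 n, Qc m * Qc (n+1-m) ≤ C m * C (n+1-m) := by
    intro m hm
    rw [Finset.mem_Icc] at hm
    have hQ1 := hQcpow m hm.1 hm.2
    have hQ2 := hQcpow (n+1-m) (by omega) (by omega)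
    rw [show n+1-(n+1-m) = m by omega] at hQ2
    rw [hcast m hm.2] at hQ2
    have hC2 : C (n+1-m) = ∏ i ∈ Finset.range m, 2 * Real.sin ((φ (i+(n+1-m)) - φ i)/2) := by
      rw [hC]
      simp only []
      rw [show n+1-(n+1-m) = m by omega]
    rw [hQ1, hQ2, hC2, hC]
    simp only []
    exact stmt8_core n ε hε (by exact_mod_cast hNε) φ pairb m hm.1 hm.2
  have hQnn : ∀ m ∈ Finset.Icc 1 n, 0 ≤ Qc m * Qc (n+1-m) := by
    intro m hm
    rw [Finset.mem_Icc] at hm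
    have hQ1 := hQcpow m hm.1 hm.2
    have hQ2 := hQcpow (n+1-m) (by omega) (by omega)
    rw [hQ1, hQ2]
    have n1 := hsinm_nonneg m (by omega)
    have n2 := hsinm_nonneg (n+1-m) (by omega)
    positivity
  have hCnn : ∀ m ∈ Finset.Icc 1 n, 0 ≤ C m := by
    intro m hm
    rw [hC]
    simp only []
    apply Finset.prod_nonneg
    intro i hi
    have := hsin_nonneg i (i+m) (by omega)
    linarith
  have hQprodnn : 0 ≤ ∏ m ∈ Finset.Icc 1 n, Qc m := by
    apply Finset.prod_nonneg
    intro m hm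
    rw [Finset.mem_Icc] at hm
    rw [hQcpow m hm.1 hm.2]
    have := hsinm_nonneg m (by omega)
    positivity
  have hCprodnn : 0 ≤ ∏ m ∈ Finset.Icc 1 n, C m := Finset.prod_nonneg hCnn
  have hsq : (∏ m ∈ Finset.Icc 1 n, Qc m)^2 ≤ (∏ m ∈ Finset.Icc 1 n, C m)^2 := by
    have e1 : (∏ m ∈ Finset.Icc 1 n, Qc m)^2
        = ∏ m ∈ Finset.Icc 1 n, (Qc m * Qc (n+1-m)) := by
      rw [Finset.prod_mul_distrib, sq, stmt8_reflect n Qc]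
    have e2 : (∏ m ∈ Finset.Icc 1 n, C m)^2
        = ∏ m ∈ Finset.Icc 1 n, (C m * C (n+1-m)) := by
      rw [Finset.prod_mul_distrib, sq, stmt8_reflect n C]
    rw [e1, e2]
    exact Finset.prod_le_prod hQnn hkey
  have := Real.sqrt_le_sqrt hsq
  rwa [Real.sqrt_sq hQprodnn, Real.sqrt_sq hCprodnn] at this
end

section
/- For all real x with 0 < x ≤ π/2, one has 1/x − 2/π ≤ cot x ≤ 1/x. -/
open Real

lemma aux_deriv (y : ℝ) (hy0 : 0 < y) (hy : y < π) :
    HasDerivAt (fun t => Real.cos t / Real.sin t - 1 / t)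
      (-1 / Real.sin y ^ 2 + 1 / y ^ 2) y := by
  have hs : Real.sin y ≠ 0 := ne_of_gt (Real.sin_pos_of_pos_of_lt_pi hy0 hy)
  have h1 : HasDerivAt (fun t => Real.cos t / Real.sin t)
      ((-Real.sin y * Real.sin y - Real.cos y * Real.cos y) / Real.sin y ^ 2) y :=
    (Real.hasDerivAt_cos y).div (Real.hasDerivAt_sin y) hs
  have h2 : HasDerivAt (fun t : ℝ => 1 / t) (-1 / y ^ 2) y := by
    have := hasDerivAt_inv (ne_of_gt hy0)
    simpa [one_div, neg_div] using this
  have : HasDerivAt (fun t => Real.cos t / Real.sin t - 1 / t) _ y := h1.sub h2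
  convert this using 1
  have hpyth : Real.sin y ^ 2 + Real.cos y ^ 2 = 1 := Real.sin_sq_add_cos_sq y
  have hy' : y ≠ 0 := ne_of_gt hy0
  field_simp
  nlinarith [hpyth]

/-- For `0 < x ≤ π/2`, `1/x − 2/π ≤ cot x ≤ 1/x`. -/
theorem stmt16 (x : ℝ) (hx0 : 0 < x) (hx : x ≤ π / 2) :
    1 / x - 2 / π ≤ Real.cot x ∧ Real.cot x ≤ 1 / x := by
  have hpi : (0:ℝ) < π := Real.pi_pos
  have hsin : 0 < Real.sin x := Real.sin_pos_of_pos_of_lt_pi hx0 (by linarith)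
  have hcot : Real.cot x = Real.cos x / Real.sin x := Real.cot_eq_cos_div_sin x
  constructor
  · -- lower bound via antitonicity of g(t) = cos t / sin t - 1/t on [x, π/2]
    set g : ℝ → ℝ := fun t => Real.cos t / Real.sin t - 1 / t with hg
    have hanti : AntitoneOn g (Set.Icc x (π/2)) := by
      apply antitoneOn_of_deriv_nonpos (convex_Icc x (π/2))
      · apply ContinuousOn.sub
        · apply ContinuousOn.div (Real.continuous_cos.continuousOn)
            (Real.continuous_sin.continuousOn)
          intro t ht
          exact ne_of_gt (Real.sin_pos_of_pos_of_lt_pi (lt_of_lt_of_le hx0 ht.1)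
            (lt_of_le_of_lt ht.2 (by linarith)))
        · exact continuousOn_const.div continuousOn_id (fun t ht => ne_of_gt (lt_of_lt_of_le hx0 ht.1))
      · intro t ht
        rw [interior_Icc] at ht
        have ht0 : 0 < t := lt_trans hx0 ht.1
        exact ((aux_deriv t ht0 (by linarith [ht.2])).differentiableAt.differentiableWithinAt)
      · intro t ht
        rw [interior_Icc] at ht
        have ht0 : 0 < t := lt_trans hx0 ht.1
        have htp : t < π := by linarith [ht.2]
        have hd := aux_deriv t ht0 htp
        have hdg : deriv g t = -1 / Real.sin t ^ 2 + 1 / t ^ 2 := hd.deriv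
        rw [hdg]
        have hst : 0 < Real.sin t := Real.sin_pos_of_pos_of_lt_pi ht0 htp
        have hlt : Real.sin t < t := Real.sin_lt ht0
        have : Real.sin t ^ 2 < t ^ 2 := by nlinarith
        have h1 : 1 / t ^ 2 < 1 / Real.sin t ^ 2 := by
          apply one_div_lt_one_div_of_lt <;> nlinarith
        have hneg : -1 / Real.sin t ^ 2 = -(1 / Real.sin t ^ 2) := by ring
        linarith [hneg]
    have hge : g (π/2) ≤ g x :=
      hanti (Set.mem_Icc.2 ⟨le_refl x, hx⟩) (Set.mem_Icc.2 ⟨hx, le_refl _⟩) hx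
    have hval : g (π/2) = -(2/π) := by
      show Real.cos (π/2) / Real.sin (π/2) - 1 / (π/2) = -(2/π)
      rw [Real.cos_pi_div_two, Real.sin_pi_div_two]
      field_simp
      ring
    rw [hcot]
    have : g x = Real.cos x / Real.sin x - 1 / x := rfl
    linarith [hge, hval.symm ▸ hge]
  · -- upper bound
    rcases eq_or_lt_of_le hx with heq | hlt
    · rw [hcot, heq]
      simp [Real.cos_pi_div_two]
      positivity
    · have htan : x < Real.tan x := Real.lt_tan hx0 hlt
      rw [hcot]
      rw [Real.tan_eq_sin_div_cos] at htan
      have hcos : 0 < Real.cos x := Real.cos_pos_of_mem_Ioo ⟨by linarith, hlt⟩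
      rw [div_le_div_iff₀ hsin hx0]
      rw [lt_div_iff₀ hcos] at htan
      nlinarith
end

section
/- For all real x in (0,1), (2/π)·x/(1−x) ≤ tan(πx/2) ≤ (π/2)·x/(1−x). -/
open Real

/-- For `x ∈ (0,1)`, `(2/π)·x/(1−x) ≤ tan(πx/2) ≤ (π/2)·x/(1−x)`. -/
theorem stmt17 (x : ℝ) (hx : x ∈ Set.Ioo (0:ℝ) 1) :
    (2 / π) * (x / (1 - x)) ≤ Real.tan (π * x / 2) ∧
    Real.tan (π * x / 2) ≤ (π / 2) * (x / (1 - x)) := by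
  obtain ⟨hx0, hx1⟩ := hx
  have hπ := Real.pi_pos
  set θ := π * x / 2 with hθ
  have hθ0 : 0 < θ := by rw [hθ]; positivity
  have hθπ : θ < π / 2 := by rw [hθ]; nlinarith
  have hs1 : Real.sin θ ≤ θ := Real.sin_le hθ0.le
  have hs2 : 2 / π * θ ≤ Real.sin θ := Real.mul_le_sin hθ0.le (by linarith)
  have hc1 : Real.cos θ ≤ π / 2 - θ := by
    rw [← Real.sin_pi_div_two_sub]
    exact Real.sin_le (by linarith)
  have hc2 : 2 / π * (π / 2 - θ) ≤ Real.cos θ := by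
    rw [← Real.sin_pi_div_two_sub]
    exact Real.mul_le_sin (by linarith) (by linarith)
  have hcpos : 0 < Real.cos θ := Real.cos_pos_of_mem_Ioo ⟨by linarith, hθπ⟩
  have h1x : 0 < 1 - x := by linarith
  have hsx : x ≤ Real.sin θ := by
    have : 2 / π * θ = x := by rw [hθ]; field_simp
    linarith
  have hcx : 1 - x ≤ Real.cos θ := by
    have : 2 / π * (π / 2 - θ) = 1 - x := by rw [hθ]; field_simp
    linarith
  have hsu : Real.sin θ ≤ π * x / 2 := by rw [hθ] at hs1; linarith
  have hcu : Real.cos θ ≤ π / 2 * (1 - x) := by rw [hθ] at hc1; nlinarith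
  rw [Real.tan_eq_sin_div_cos]
  constructor
  · have e : (2 / π) * (x / (1 - x)) = (2 * x) / (π * (1 - x)) := by
      field_simp
    rw [e, div_le_div_iff₀ (by positivity) hcpos]
    nlinarith [mul_pos hπ h1x, mul_le_mul_of_nonneg_left hcu (le_of_lt hx0)]
  · have e : (π / 2) * (x / (1 - x)) = (π * x) / (2 * (1 - x)) := by
      field_simp
    rw [e, div_le_div_iff₀ hcpos (by positivity)]
    nlinarith [mul_le_mul_of_nonneg_left hcx (by positivity : (0:ℝ) ≤ π * x)]
end
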